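/- If the noiseless sLORETA standardization is applied with the wrong lead field L' whose k-th column is proportional to the k-th column of the true lead field L used to generate y = L e_k (i.e., L' e_k = c L e_k for some c ≠ 0), and R' = L'^T(L'L'^T)^† L' has strictly positive diagonal, then the standardized score computed from L' still attains its maximum at index k provided additionally that (L'^T y)_j = R'_{jk}·c for all j; in particular s'_j = c² R'_{jk}²/R'_{jj} ≤ c² R'_{kk} = s'_k. -/

import Mathlib

open Matrix

/-- Scalar Cauchy–Schwarz for entries of a real PSD matrix. -/
lemma psd_entry_sq_le {n : ℕ} (A : Matrix (Fin n) (Fin n) ℝ) (hA : A.PosSemidef)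
    (j k : Fin n) (hjj : 0 < A j j) : (A j k)^2 ≤ A j j * A k k := by
  have hsym : A k j = A j k := by
    have := hA.1
    rw [IsHermitian] at this
    conv_lhs => rw [← this]
    simp [conjTranspose_apply]
  have key : ∀ t : ℝ, 0 ≤ A j j * t^2 + 2 * A j k * t + A k k := by
    intro t
    have h := hA.dotProduct_mulVec_nonneg (t • (Pi.single j 1 : Fin n → ℝ) + Pi.single k 1)
    simp only [star_trivial, mulVec_add, mulVec_smul, dotProduct_add, add_dotProduct,
      dotProduct_smul, smul_dotProduct, mulVec_single, smul_eq_mul,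
      single_dotProduct, dotProduct_single, one_mul, mul_one, Pi.add_apply,
      Pi.smul_apply] at h
    simp only [Matrix.col_apply, op_smul_eq_mul, mul_one] at h; rw [hsym] at h; linear_combination h
  have h := key (-(A j k) / A j j)
  have h2 : (A j j) ≠ 0 := hjj.ne'
  field_simp at h
  nlinarith [h]

/-- `P` is the Moore–Penrose pseudoinverse of the square matrix `M`
(Penrose conditions). -/
def IsMoorePenrose {k : ℕ} (M P : Matrix (Fin k) (Fin k) ℝ) : Prop :=
  M * P * M = M ∧ P * M * P = P ∧ (M * P)ᵀ = M * P ∧ (P * M)ᵀ = P * M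

/-- The pseudoinverse of a symmetric real matrix is symmetric. -/
lemma pinv_symm {k : ℕ} {M P : Matrix (Fin k) (Fin k) ℝ}
    (hP : IsMoorePenrose M P) (hMsym : Mᵀ = M) : Pᵀ = P := by
  obtain ⟨h1, h2, h3, h4⟩ := hP
  have e2 : M * Pᵀ = P * M := by rw [← h4, transpose_mul, hMsym]
  have e1 : Pᵀ * M = M * P := by rw [← h3, transpose_mul, hMsym]
  have hMPtM : M * Pᵀ * M = M := by
    have h := congrArg Matrix.transpose h1
    rwa [transpose_mul, transpose_mul, hMsym, ← mul_assoc] at h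
  have e2sym : (M * Pᵀ)ᵀ = M * Pᵀ := by
    rw [transpose_mul, transpose_transpose, hMsym, e2]
  have e3 : M * P = M * Pᵀ := by
    calc M * P = (M * P)ᵀ := h3.symm
    _ = (M * Pᵀ * (M * P))ᵀ := by rw [← mul_assoc, hMPtM]
    _ = (M * P)ᵀ * (M * Pᵀ)ᵀ := transpose_mul _ _
    _ = (M * P) * (M * Pᵀ) := by rw [h3, e2sym]
    _ = (M * P * M) * Pᵀ := by rw [mul_assoc (M * P) M Pᵀ]
    _ = M * Pᵀ := by rw [h1]
  have e4 : P * M = Pᵀ * M := by rw [← e2, ← e3, e1]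
  have h2t : Pᵀ * M * Pᵀ = Pᵀ := by
    have h := congrArg Matrix.transpose h2
    rwa [transpose_mul, transpose_mul, hMsym, ← mul_assoc] at h
  calc Pᵀ = Pᵀ * M * Pᵀ := h2t.symm
  _ = P * M * Pᵀ := by rw [← e4]
  _ = P * (M * Pᵀ) := mul_assoc _ _ _
  _ = P * (M * P) := by rw [← e3]
  _ = P := by rw [← mul_assoc, h2]

/-- sLORETA with a mismatched lead field. Suppose
`y = L e_k`, the wrong lead field `L'` has `L' e_k = c · L e_k` with `c ≠ 0`,
`R' = L'ᵀ (L' L'ᵀ)† L'` has strictly positive diagonal, and additionally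
`(L'ᵀ y)_j = R'_{jk} · c` for all `j`. Then the standardized score
`s'_j = (L'ᵀ y)_j² / R'_{jj}` satisfies
`s'_j = c² R'_{jk}² / R'_{jj} ≤ c² R'_{kk} = s'_k`, so the score still
attains its maximum at index `k`. -/
theorem sloreta_mismatched_lead_field {m n : ℕ}
    (L L' : Matrix (Fin m) (Fin n) ℝ) (P : Matrix (Fin m) (Fin m) ℝ)
    (hP : IsMoorePenrose (L' * L'ᵀ) P)
    (R' : Matrix (Fin n) (Fin n) ℝ) (hR' : R' = L'ᵀ * P * L')
    (hdiag : ∀ j, 0 < R' j j)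
    (k : Fin n) (c : ℝ) (hc : c ≠ 0)
    (y : Fin m → ℝ) (hy : y = L *ᵥ (Pi.single k 1))
    (hprop : L' *ᵥ (Pi.single k 1 : Fin n → ℝ) = c • (L *ᵥ (Pi.single k 1)))
    (hproj : ∀ j : Fin n, (L'ᵀ *ᵥ y) j = R' j k * c) :
    (∀ j : Fin n,
      ((L'ᵀ *ᵥ y) j) ^ 2 / R' j j = c ^ 2 * (R' j k) ^ 2 / R' j j) ∧
    (∀ j : Fin n, ((L'ᵀ *ᵥ y) j) ^ 2 / R' j j ≤ c ^ 2 * R' k k) ∧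
    ((L'ᵀ *ᵥ y) k) ^ 2 / R' k k = c ^ 2 * R' k k := by
  have hMsym : (L' * L'ᵀ)ᵀ = L' * L'ᵀ := by
    rw [transpose_mul, transpose_transpose]
  have hPsym : Pᵀ = P := pinv_symm hP hMsym
  obtain ⟨h1, h2, h3, h4⟩ := hP
  have hRsym : R'ᵀ = R' := by
    rw [hR', transpose_mul, transpose_mul, transpose_transpose, hPsym, Matrix.mul_assoc]
  have hRidem : R' * R' = R' := by
    have key : (L'ᵀ * P * L') * (L'ᵀ * P * L') = L'ᵀ * (P * (L' * L'ᵀ) * P) * L' := by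
      simp only [Matrix.mul_assoc]
    rw [hR', key, h2]
  have hPSD : R'.PosSemidef := by
    have hEq : R' = R'ᴴ * R' := by
      rw [conjTranspose_eq_transpose_of_trivial, hRsym, hRidem]
    rw [hEq]
    exact posSemidef_conjTranspose_mul_self R'
  have hCS : ∀ j : Fin n, (R' j k)^2 ≤ R' j j * R' k k := fun j =>
    psd_entry_sq_le R' hPSD j k (hdiag j)
  refine ⟨fun j => ?_, fun j => ?_, ?_⟩
  · rw [hproj j]; ring_nf
  · rw [hproj j, div_le_iff₀ (hdiag j)]
    have := hCS j
    nlinarith [sq_nonneg c, (hdiag j).le, (hdiag k).le]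
  · rw [hproj k, div_eq_iff (hdiag k).ne']
    ring
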